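/- Let n, m be positive integers. Let ḡ⁺, g⁺, g₀⁺ be real m×n matrices and g, g₀ be real n×m matrices with g⁺ g = I_m and g₀⁺ g₀ = I_m. Let f, f₀, d, d₀ ∈ ℝⁿ, u, u₀ ∈ ℝᵐ, and define ẋ = f + g u + d, ẋ₀ = f₀ + g₀ u₀ + d₀, H = (ḡ⁺ − g⁺)ẋ + g⁺ f + g⁺ d, H₀ = (ḡ⁺ − g₀⁺)ẋ₀ + g₀⁺ f₀ + g₀⁺ d₀, and ξ = H − H₀. Suppose there exist constants c ≥ 0, β ≥ 0, δ̄₁ ≥ 0 such that (i) ‖(ḡ⁺ g − I_m) v‖ ≤ c ‖v‖ for all v ∈ ℝᵐ, (ii) ‖u − u₀‖ ≤ 2β, and (iii) ‖ḡ⁺[(g − g₀)u₀ + (f − f₀) + (d − d₀)]‖ ≤ δ̄₁. Then ‖ξ‖ ≤ 2βc + δ̄₁. -/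
import Mathlib


/-- The Euclidean norm of a finite real vector. -/
noncomputable def eucNorm {k : ℕ} (v : Fin k → ℝ) : ℝ :=
  ‖(WithLp.equiv 2 (Fin k → ℝ)).symm v‖

lemma eucNorm_add_le {k : ℕ} (a b : Fin k → ℝ) :
    eucNorm (a + b) ≤ eucNorm a + eucNorm b := by
  unfold eucNorm
  exact norm_add_le _ _

/-- Boundedness of the time-delay-estimation error (Lemma 1). -/
theorem tde_error_bound (n m : ℕ) (hn : 0 < n) (hm : 0 < m)
    (gbp gp g0p : Matrix (Fin m) (Fin n) ℝ) (g g0 : Matrix (Fin n) (Fin m) ℝ)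
    (hg : gp * g = 1) (hg0 : g0p * g0 = 1)
    (f f0 d d0 : Fin n → ℝ) (u u0 : Fin m → ℝ)
    (xdot xdot0 : Fin n → ℝ) (H H0 ξ : Fin m → ℝ)
    (hxdot : xdot = f + g.mulVec u + d)
    (hxdot0 : xdot0 = f0 + g0.mulVec u0 + d0)
    (hH : H = (gbp - gp).mulVec xdot + gp.mulVec f + gp.mulVec d)
    (hH0 : H0 = (gbp - g0p).mulVec xdot0 + g0p.mulVec f0 + g0p.mulVec d0)
    (hξ : ξ = H - H0)
    (c β δ₁ : ℝ) (hc : 0 ≤ c) (hβ : 0 ≤ β) (hδ₁ : 0 ≤ δ₁)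
    (hcb : ∀ v : Fin m → ℝ, eucNorm ((gbp * g - 1).mulVec v) ≤ c * eucNorm v)
    (hu : eucNorm (u - u0) ≤ 2 * β)
    (hδ : eucNorm (gbp.mulVec ((g - g0).mulVec u0 + (f - f0) + (d - d0))) ≤ δ₁) :
    eucNorm ξ ≤ 2 * β * c + δ₁ := by
  have key : ξ = (gbp * g - 1).mulVec (u - u0)
      + gbp.mulVec ((g - g0).mulVec u0 + (f - f0) + (d - d0)) := by
    subst hξ hH hH0 hxdot hxdot0
    have hgp : ∀ v, gp.mulVec (g.mulVec v) = v := by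
      intro v
      rw [Matrix.mulVec_mulVec, hg, Matrix.one_mulVec]
    have hg0p : ∀ v, g0p.mulVec (g0.mulVec v) = v := by
      intro v
      rw [Matrix.mulVec_mulVec, hg0, Matrix.one_mulVec]
    simp only [Matrix.sub_mulVec, Matrix.mulVec_add, Matrix.mulVec_sub,
      Matrix.one_mulVec, ← Matrix.mulVec_mulVec, hgp, hg0p]
    abel
  rw [key]
  have h1 := eucNorm_add_le ((gbp * g - 1).mulVec (u - u0))
    (gbp.mulVec ((g - g0).mulVec u0 + (f - f0) + (d - d0)))
  have h2 : eucNorm ((gbp * g - 1).mulVec (u - u0)) ≤ c * (2 * β) :=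
    (hcb _).trans (mul_le_mul_of_nonneg_left hu hc)
  nlinarith [h1, h2, hδ]
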